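/- For every ν > −1 there exist constants 0 < c₁ ≤ c₂ < ∞ such that c₁ (1−x) ≤ φ_1^ν(x) ≤ c₂ (1−x) for all x ∈ (0,1), where φ_1^ν is the first Fourier-Bessel function. -/

import Mathlib

open MeasureTheory Real

/-- Bessel function of the first kind of order `ν`, defined by its power series
(valid for positive arguments). -/
noncomputable def besselJ (ν x : ℝ) : ℝ :=
  ∑' k : ℕ, ((-1 : ℝ) ^ k / (k.factorial * Real.Gamma (k + ν + 1))) *
    (x / 2) ^ (2 * (k : ℝ) + ν)

/-- The predicate that `Λ` enumerates the successive positive zeros of `J_ν`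
in increasing order (`Λ 0` is the first positive zero `λ_{1,ν}`). -/
def IsBesselZeros (ν : ℝ) (Λ : ℕ → ℝ) : Prop :=
  (∀ n, 0 < Λ n) ∧ StrictMono Λ ∧ (∀ n, besselJ ν (Λ n) = 0) ∧
    (∀ x, 0 < x → besselJ ν x = 0 → ∃ n, Λ n = x)

/-- The Fourier–Bessel function `φ_{n+1}^ν` (indexing starts at `n = 0`). -/
noncomputable def fbPhi (ν : ℝ) (Λ : ℕ → ℝ) (n : ℕ) (x : ℝ) : ℝ :=
  (Real.sqrt 2 / |Real.sqrt (Λ n) * besselJ (ν + 1) (Λ n)|) *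
    x ^ (-ν - 1 / 2 : ℝ) * Real.sqrt (Λ n * x) * besselJ ν (Λ n * x)

/-- The subordinated Fourier–Bessel kernel `G_t^{ν,α}(x,y)`. -/
noncomputable def fbKernel (ν α : ℝ) (Λ : ℕ → ℝ) (t x y : ℝ) : ℝ :=
  ∑' n : ℕ, Real.exp (-t * Λ n ^ α) * fbPhi ν Λ n x * fbPhi ν Λ n y



namespace FBaux

noncomputable def bA (μ : ℝ) (k : ℕ) : ℝ :=
  (-1 : ℝ) ^ k / (k.factorial * Real.Gamma (k + μ + 1))

noncomputable def bF (μ : ℝ) (u : ℝ) : ℝ := ∑' k : ℕ, bA μ k * u ^ k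

open Filter

variable {μ : ℝ}

lemma arg_pos (hμ : -1 < μ) (k : ℕ) : 0 < (k : ℝ) + μ + 1 := by
  have : (0:ℝ) ≤ k := Nat.cast_nonneg k
  linarith

lemma gamma_pos (hμ : -1 < μ) (k : ℕ) : 0 < Real.Gamma ((k : ℝ) + μ + 1) :=
  Real.Gamma_pos_of_pos (arg_pos hμ k)

lemma bA_ne (hμ : -1 < μ) (k : ℕ) : bA μ k ≠ 0 :=
  div_ne_zero (pow_ne_zero _ (by norm_num))
    (mul_ne_zero (Nat.cast_ne_zero.2 k.factorial_ne_zero) (gamma_pos hμ k).ne')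

lemma bA_succ (hμ : -1 < μ) (k : ℕ) :
    bA μ (k + 1) = -bA μ k / (((k : ℝ) + 1) * ((k : ℝ) + μ + 1)) := by
  have hcast : (((k + 1 : ℕ)) : ℝ) + μ + 1 = ((k : ℝ) + μ + 1) + 1 := by push_cast; ring
  have hg := gamma_pos hμ k
  have hf : ((k.factorial : ℝ)) ≠ 0 := Nat.cast_ne_zero.2 k.factorial_ne_zero
  have ha := arg_pos hμ k
  rw [bA, bA, hcast, Real.Gamma_add_one (arg_pos hμ k).ne', Nat.factorial_succ]
  push_cast
  rw [pow_succ]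
  field_simp

lemma bA_shift (k : ℕ) : ((k : ℝ) + 1) * bA μ (k + 1) = -bA (μ + 1) k := by
  have hcast : (((k + 1 : ℕ)) : ℝ) + μ + 1 = (k : ℝ) + (μ + 1) + 1 := by push_cast; ring
  rw [bA, bA, hcast, Nat.factorial_succ]
  push_cast
  rw [pow_succ]
  have hf : ((k.factorial : ℝ)) ≠ 0 := Nat.cast_ne_zero.2 k.factorial_ne_zero
  rcases eq_or_ne (Real.Gamma ((k : ℝ) + (μ + 1) + 1)) 0 with hg | hg
  · rw [hg]; simp
  · field_simp

lemma bA_rec0 (hμ : -1 < μ) : bA μ 0 - (μ + 1) * bA (μ + 1) 0 = 0 := by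
  have h1 : ((0 : ℕ) : ℝ) + μ + 1 = μ + 1 := by push_cast; ring
  have h2 : ((0 : ℕ) : ℝ) + (μ + 1) + 1 = (μ + 1) + 1 := by push_cast; ring
  have hμ1 : (0:ℝ) < μ + 1 := by linarith
  rw [bA, bA, h1, h2, Real.Gamma_add_one hμ1.ne']
  have hg := Real.Gamma_pos_of_pos hμ1
  field_simp
  simp

lemma bA_rec (hμ : -1 < μ) (k : ℕ) :
    bA μ (k + 1) - (μ + 1) * bA (μ + 1) (k + 1) = -bA (μ + 2) k := by
  have ht : (0:ℝ) < (k : ℝ) + μ + 2 := by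
    have : (0:ℝ) ≤ k := Nat.cast_nonneg k
    linarith
  have h1 : (((k + 1 : ℕ)) : ℝ) + μ + 1 = (k : ℝ) + μ + 2 := by push_cast; ring
  have h2 : (((k + 1 : ℕ)) : ℝ) + (μ + 1) + 1 = ((k : ℝ) + μ + 2) + 1 := by push_cast; ring
  have h3 : ((k : ℕ) : ℝ) + (μ + 2) + 1 = ((k : ℝ) + μ + 2) + 1 := by push_cast; ring
  rw [bA, bA, bA, h1, h2, h3, Real.Gamma_add_one ht.ne', Nat.factorial_succ]
  have hg := Real.Gamma_pos_of_pos ht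
  have hf : ((k.factorial : ℝ)) ≠ 0 := Nat.cast_ne_zero.2 k.factorial_ne_zero
  push_cast
  rw [pow_succ]
  field_simp
  ring


lemma tendsto_aux (μ r : ℝ) :
    Tendsto (fun n : ℕ => r / (((n : ℝ) + 1) * ((n : ℝ) + μ + 1))) atTop (nhds 0) := by
  apply Tendsto.div_atTop (tendsto_const_nhds (x := r))
  apply Tendsto.atTop_mul_atTop₀
  · exact tendsto_atTop_add_const_right _ 1 tendsto_natCast_atTop_atTop
  · have h := tendsto_atTop_add_const_right atTop (μ + 1) (tendsto_natCast_atTop_atTop (R := ℝ))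
    exact h.congr fun n => by ring

lemma abs_bA_succ (hμ : -1 < μ) (k : ℕ) :
    |bA μ (k + 1)| = |bA μ k| / (((k : ℝ) + 1) * ((k : ℝ) + μ + 1)) := by
  have hc : (0:ℝ) < ((k : ℝ) + 1) * ((k : ℝ) + μ + 1) := by
    have h1 : (0:ℝ) ≤ k := Nat.cast_nonneg k
    have := arg_pos hμ k
    positivity
  rw [bA_succ hμ k, abs_div, abs_neg, abs_of_pos hc]

lemma summable_abs_r (hμ : -1 < μ) {r : ℝ} (hr : 0 < r) :
    Summable (fun k : ℕ => |bA μ k| * r ^ k) := by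
  have hpos : ∀ k : ℕ, 0 < |bA μ k| * r ^ k := fun k =>
    mul_pos (abs_pos.2 (bA_ne hμ k)) (pow_pos hr k)
  apply summable_of_ratio_test_tendsto_lt_one one_pos
    (Eventually.of_forall fun k => (hpos k).ne')
  have heq : ∀ n : ℕ,
      ‖|bA μ (n + 1)| * r ^ (n + 1)‖ / ‖|bA μ n| * r ^ n‖
        = r / (((n : ℝ) + 1) * ((n : ℝ) + μ + 1)) := by
    intro n
    have hc : (0:ℝ) < ((n : ℝ) + 1) * ((n : ℝ) + μ + 1) := by
      have h1 : (0:ℝ) ≤ n := Nat.cast_nonneg n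
      have := arg_pos hμ n
      positivity
    rw [Real.norm_eq_abs, Real.norm_eq_abs, abs_of_pos (hpos (n + 1)), abs_of_pos (hpos n),
      abs_bA_succ hμ n, pow_succ]
    have hb : |bA μ n| ≠ 0 := abs_ne_zero.2 (bA_ne hμ n)
    have hrn : r ^ n ≠ 0 := (pow_pos hr n).ne'
    field_simp
  rw [show (0:ℝ) = 0 from rfl]
  refine (tendsto_congr fun n => (heq n).symm).1 (tendsto_aux μ r)

lemma summable_bF (hμ : -1 < μ) (u : ℝ) : Summable (fun k : ℕ => bA μ k * u ^ k) := by
  apply Summable.of_norm_bounded (summable_abs_r hμ (show (0:ℝ) < |u| + 1 by positivity))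
  intro k
  rw [norm_mul, norm_pow, Real.norm_eq_abs, Real.norm_eq_abs]
  have h1 : |u| ≤ |u| + 1 := by linarith
  exact mul_le_mul_of_nonneg_left (pow_le_pow_left₀ (abs_nonneg u) h1 k) (abs_nonneg _)

lemma bF_hasDerivAt (hμ : -1 < μ) (y : ℝ) : HasDerivAt (bF μ) (-bF (μ + 1) y) y := by
  have hμ1 : -1 < μ + 1 := by linarith
  set R : ℝ := |y| + 1 with hRdef
  have hR0 : (0:ℝ) < R := by positivity
  have hyR : y ∈ Set.Ioo (-R) R := by
    constructor
    · have := neg_abs_le y; simp only [hRdef]; linarith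
    · have := le_abs_self y; simp only [hRdef]; linarith
  set u : ℕ → ℝ := fun n => match n with
    | 0 => 0
    | (k + 1) => |bA (μ + 1) k| * R ^ k with hudef
  have hu : Summable u := by
    rw [← summable_nat_add_iff 1]
    exact (summable_abs_r hμ1 hR0).congr fun k => rfl
  have hbound : ∀ (n : ℕ) (z : ℝ), z ∈ Set.Ioo (-R) R →
      ‖bA μ n * ((n : ℝ) * z ^ (n - 1))‖ ≤ u n := by
    intro n z hz
    have hzR : |z| ≤ R := le_of_lt (abs_lt.2 ⟨hz.1, hz.2⟩)
    match n with
    | 0 => simp [hudef]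
    | (k + 1) =>
      have : bA μ (k + 1) * (((k + 1 : ℕ) : ℝ) * z ^ k)
          = -(bA (μ + 1) k * z ^ k) := by
        have h := bA_shift (μ := μ) k
        push_cast
        linear_combination z ^ k * h
      simp only [Nat.add_sub_cancel]
      rw [this, norm_neg, norm_mul, norm_pow, Real.norm_eq_abs, Real.norm_eq_abs]
      exact mul_le_mul_of_nonneg_left (pow_le_pow_left₀ (abs_nonneg z) hzR k) (abs_nonneg _)
  have hg : ∀ (n : ℕ) (z : ℝ), z ∈ Set.Ioo (-R) R →
      HasDerivAt (fun w => bA μ n * w ^ n) (bA μ n * ((n : ℝ) * z ^ (n - 1))) z :=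
    fun n z _ => (hasDerivAt_pow n z).const_mul (bA μ n)
  have H := hasDerivAt_tsum_of_isPreconnected hu isOpen_Ioo
    (Convex.isPreconnected (convex_Ioo _ _)) hg hbound hyR (summable_bF hμ y) hyR
  have hval : (∑' n : ℕ, bA μ n * ((n : ℝ) * y ^ (n - 1))) = -bF (μ + 1) y := by
    have hs : Summable (fun n : ℕ => bA μ n * ((n : ℝ) * y ^ (n - 1))) :=
      Summable.of_norm_bounded hu fun n => hbound n y hyR
    rw [hs.tsum_eq_zero_add]
    simp only [Nat.cast_zero, zero_mul, mul_zero, zero_add, Nat.cast_add, Nat.cast_one,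
      Nat.add_sub_cancel]
    have hterm : ∀ k : ℕ, bA μ (k + 1) * (((k : ℝ) + 1) * y ^ k)
        = -(bA (μ + 1) k * y ^ k) := by
      intro k
      have h := bA_shift (μ := μ) k
      linear_combination y ^ k * h
    rw [tsum_congr hterm, tsum_neg]
    rfl
  rw [← hval]
  exact H

lemma bF_continuous (hμ : -1 < μ) : Continuous (bF μ) :=
  continuous_iff_continuousAt.2 fun x => (bF_hasDerivAt hμ x).continuousAt


lemma bF_zero (hμ : -1 < μ) : bF μ 0 = 1 / Real.Gamma (μ + 1) := by
  rw [bF, tsum_eq_single 0 (fun k hk => by simp [zero_pow hk])]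
  simp [bA]

lemma bF_zero_pos (hμ : -1 < μ) : 0 < bF μ 0 := by
  rw [bF_zero hμ]
  have := Real.Gamma_pos_of_pos (show (0:ℝ) < μ + 1 by linarith)
  positivity

lemma bF_rec (hμ : -1 < μ) (u : ℝ) :
    bF μ u = (μ + 1) * bF (μ + 1) u - u * bF (μ + 2) u := by
  have hμ1 : -1 < μ + 1 := by linarith
  have hμ2 : -1 < μ + 2 := by linarith
  have h1 := summable_bF hμ u
  have h2 := summable_bF hμ1 u
  have h3 := summable_bF hμ2 u
  have key : bF μ u - (μ + 1) * bF (μ + 1) u = -u * bF (μ + 2) u := by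
    have e1 : (μ + 1) * bF (μ + 1) u = ∑' k : ℕ, (μ + 1) * (bA (μ + 1) k * u ^ k) := by
      rw [bF, tsum_mul_left]
    rw [bF, e1, ← h1.tsum_sub (h2.mul_left _)]
    have hsum : Summable (fun k : ℕ => (bA μ k - (μ + 1) * bA (μ + 1) k) * u ^ k) :=
      (h1.sub (h2.mul_left (μ + 1))).congr fun k => by ring
    rw [tsum_congr (fun k : ℕ => show bA μ k * u ^ k - (μ + 1) * (bA (μ + 1) k * u ^ k)
      = (bA μ k - (μ + 1) * bA (μ + 1) k) * u ^ k by ring)]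
    rw [hsum.tsum_eq_zero_add]
    rw [tsum_congr (fun k : ℕ => show (bA μ (k + 1) - (μ + 1) * bA (μ + 1) (k + 1)) * u ^ (k + 1)
      = -u * (bA (μ + 2) k * u ^ k) by rw [bA_rec hμ k]; ring)]
    rw [tsum_mul_left, bA_rec0 hμ]
    simp only [zero_mul, zero_add]
    rfl
  linarith

lemma bF_analyticAt (hμ : -1 < μ) (u : ℝ) : AnalyticAt ℝ (bF μ) u := by
  set p := FormalMultilinearSeries.ofScalars ℝ (bA μ) with hp
  have hrad : p.radius = ⊤ := by
    apply FormalMultilinearSeries.ofScalars_radius_eq_top_of_tendsto ℝ (bA μ)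
      (Eventually.of_forall (bA_ne hμ))
    have heq : ∀ n : ℕ, ‖bA μ (n + 1)‖ / ‖bA μ n‖
        = 1 / (((n : ℝ) + 1) * ((n : ℝ) + μ + 1)) := by
      intro n
      rw [Real.norm_eq_abs, Real.norm_eq_abs, abs_bA_succ hμ n]
      have hb : |bA μ n| ≠ 0 := abs_ne_zero.2 (bA_ne hμ n)
      have hc : (0:ℝ) < ((n : ℝ) + 1) * ((n : ℝ) + μ + 1) := by
        have h1 : (0:ℝ) ≤ n := Nat.cast_nonneg n
        have := arg_pos hμ n
        positivity
      field_simp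
    exact (tendsto_congr fun n => (heq n).symm).1 (tendsto_aux μ 1)
  have hsum_eq : p.sum = bF μ := by
    funext v
    rw [FormalMultilinearSeries.sum, bF]
    exact tsum_congr fun n => by
      rw [FormalMultilinearSeries.ofScalars_apply_eq, smul_eq_mul]
  have hball := p.hasFPowerSeriesOnBall (by rw [hrad]; exact ENNReal.zero_lt_top)
  rw [hrad, hsum_eq] at hball
  exact hball.analyticAt_of_mem (by simp [EMetric.mem_ball, edist_lt_top])

lemma bF_iteratedDeriv (hμ : -1 < μ) (n : ℕ) :
    iteratedDeriv n (bF μ) = fun v => (-1 : ℝ) ^ n * bF (μ + n) v := by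
  induction n with
  | zero => funext v; simp
  | succ k ih =>
    have hμk : -1 < μ + k := by
      have : (0:ℝ) ≤ k := Nat.cast_nonneg k
      linarith
    funext v
    rw [iteratedDeriv_succ, ih]
    have hd : HasDerivAt (fun z => (-1 : ℝ) ^ k * bF (μ + k) z)
        ((-1 : ℝ) ^ k * -bF (μ + k + 1) v) v := (bF_hasDerivAt hμk v).const_mul _
    rw [hd.deriv]
    have : μ + ((k : ℝ) + 1) = μ + k + 1 := by ring
    push_cast [this, pow_succ]
    ring

lemma eventually_zero_of_iteratedDeriv {f : ℝ → ℝ} {x : ℝ} (hf : AnalyticAt ℝ f x)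
    (hd : ∀ n, iteratedDeriv n f x = 0) : f =ᶠ[nhds x] 0 := by
  obtain ⟨p, hpf⟩ := hf
  obtain ⟨r, hball⟩ := hpf
  have hcoeff : ∀ (n : ℕ) (z : ℝ), (p n fun _ => z) = 0 := by
    intro n z
    have h1 := hball.factorial_smul z n
    have h2 : iteratedFDeriv ℝ n f x (fun _ => z) = z ^ n • iteratedFDeriv ℝ n f x (fun _ => 1) := by
      have h := (iteratedFDeriv ℝ n f x).map_smul_univ (fun _ : Fin n => z) (fun _ => (1:ℝ))
      simpa [smul_eq_mul] using h
    have h3 : iteratedFDeriv ℝ n f x (fun _ => (1:ℝ)) = 0 := by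
      rw [← iteratedDeriv_eq_iteratedFDeriv]; exact hd n
    rw [h2, h3, smul_zero] at h1
    have hfac : ((n.factorial : ℝ)) ≠ 0 := Nat.cast_ne_zero.2 n.factorial_ne_zero
    have := h1
    rw [nsmul_eq_mul] at this
    exact (mul_eq_zero.1 this).resolve_left hfac
  filter_upwards [EMetric.ball_mem_nhds x hball.r_pos] with z hz
  have hz' : z - x ∈ Metric.eball (0:ℝ) r := by
    simpa [Metric.mem_eball, edist_dist, dist_eq_norm] using hz
  have hsum := hball.hasSum hz'
  rw [show x + (z - x) = z by ring] at hsum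
  have hz0 : (fun n : ℕ => p n fun _ => z - x) = fun _ => (0:ℝ) :=
    funext fun n => hcoeff n _
  rw [hz0] at hsum
  simpa using hsum.unique hasSum_zero


lemma bF_no_common_zero (hμ : -1 < μ) {u₀ : ℝ} (hu₀ : u₀ ≠ 0)
    (hA : bF μ u₀ = 0) (hB : bF (μ + 1) u₀ = 0) : False := by
  have key : ∀ n : ℕ, bF (μ + n) u₀ = 0 ∧ bF (μ + n + 1) u₀ = 0 := by
    intro n
    induction n with
    | zero => refine ⟨by simpa using hA, by simpa using hB⟩
    | succ k ih =>
      have hμk : -1 < μ + k := by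
        have : (0:ℝ) ≤ k := Nat.cast_nonneg k
        linarith
      have hrec := bF_rec hμk u₀
      rw [ih.1, ih.2] at hrec
      have h2 : bF (μ + k + 2) u₀ = 0 := by
        have hu : u₀ * bF (μ + (k:ℝ) + 1 + 1) u₀ = 0 := by
          have : μ + (k:ℝ) + 1 + 1 = μ + (k:ℝ) + 2 := by ring
          rw [this]; linarith
        exact (mul_eq_zero.1 (by
          have : μ + (k:ℝ) + 2 = μ + (k:ℝ) + 1 + 1 := by ring
          rw [this]; exact hu)).resolve_left hu₀
      constructor
      · rw [show ((k + 1 : ℕ) : ℝ) = (k : ℝ) + 1 by push_cast; ring,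
          show μ + ((k : ℝ) + 1) = μ + (k : ℝ) + 1 by ring]
        exact ih.2
      · rw [show ((k + 1 : ℕ) : ℝ) = (k : ℝ) + 1 by push_cast; ring,
          show μ + ((k : ℝ) + 1) + 1 = μ + (k : ℝ) + 2 by ring]
        exact h2
  have hder : ∀ n, iteratedDeriv n (bF μ) u₀ = 0 := fun n => by
    rw [bF_iteratedDeriv hμ n]
    simp [(key n).1]
  have hev := eventually_zero_of_iteratedDeriv (bF_analyticAt hμ u₀) hder
  have hanal : AnalyticOnNhd ℝ (bF μ) Set.univ := fun z _ => bF_analyticAt hμ z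
  have h0 : bF μ 0 = 0 := hanal.eqOn_zero_of_preconnected_of_eventuallyEq_zero
    isPreconnected_univ (Set.mem_univ u₀) hev (Set.mem_univ 0)
  exact absurd h0 (bF_zero_pos hμ).ne'

lemma besselJ_eq (μ : ℝ) {x : ℝ} (hx : 0 < x) :
    besselJ μ x = (x / 2) ^ μ * bF μ ((x / 2) ^ 2) := by
  have hx2 : (0:ℝ) < x / 2 := by linarith
  rw [besselJ, bF, ← tsum_mul_left]
  apply tsum_congr
  intro k
  have hpow : (x / 2 : ℝ) ^ (2 * (k : ℝ) + μ) = ((x / 2) ^ 2) ^ k * (x / 2) ^ μ := by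
    rw [Real.rpow_add hx2]
    congr 1
    rw [show (2 * (k : ℝ)) = ((2 * k : ℕ) : ℝ) by push_cast; ring, Real.rpow_natCast, pow_mul]
  rw [hpow, bA]
  ring


end FBaux

open Filter

/-- The first Fourier–Bessel function satisfies `φ_1^ν(x) ≍ 1 - x` on `(0,1)`.
Here `l₁` is the smallest positive zero of `J_ν`. -/
theorem fb_first_eigenfunction_bounds (ν : ℝ) (hν : -1 < ν) (l₁ : ℝ) (hpos : 0 < l₁)
    (hzero : besselJ ν l₁ = 0) (hmin : ∀ z : ℝ, 0 < z → z < l₁ → besselJ ν z ≠ 0) :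
    ∃ c₁ c₂ : ℝ, 0 < c₁ ∧ c₁ ≤ c₂ ∧
      ∀ x : ℝ, x ∈ Set.Ioo (0 : ℝ) 1 →
        c₁ * (1 - x) ≤ fbPhi ν (fun _ => l₁) 0 x ∧
        fbPhi ν (fun _ => l₁) 0 x ≤ c₂ * (1 - x) := by
  classical
  have hν1 : -1 < ν + 1 := by linarith
  have hl2 : (0:ℝ) < l₁ / 2 := by linarith
  have hu₀ : (0:ℝ) < (l₁ / 2) ^ 2 := by positivity
  -- bF ν vanishes at u₀ := (l₁/2)^2
  have hF0 : FBaux.bF ν ((l₁ / 2) ^ 2) = 0 := by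
    have h := FBaux.besselJ_eq ν hpos
    rw [hzero] at h
    have hne : (l₁ / 2 : ℝ) ^ ν ≠ 0 := (Real.rpow_pos_of_pos hl2 ν).ne'
    exact (mul_eq_zero.1 h.symm).resolve_left hne
  have hF1 : FBaux.bF (ν + 1) ((l₁ / 2) ^ 2) ≠ 0 := fun h =>
    FBaux.bF_no_common_zero hν hu₀.ne' hF0 h
  -- the profile function
  set q : ℝ → ℝ := fun x => FBaux.bF ν ((l₁ * x / 2) ^ 2) with hq
  have hqcont : Continuous q :=
    (FBaux.bF_continuous hν).comp (by continuity)
  have hq1 : q 1 = 0 := by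
    show FBaux.bF ν ((l₁ * 1 / 2) ^ 2) = 0
    rw [show (l₁ * 1 / 2) ^ 2 = (l₁ / 2) ^ 2 by ring]
    exact hF0
  have hq0 : 0 < q 0 := by
    show 0 < FBaux.bF ν ((l₁ * 0 / 2) ^ 2)
    rw [show (l₁ * 0 / 2) ^ 2 = (0:ℝ) by ring]
    exact FBaux.bF_zero_pos hν
  have hJx : ∀ x : ℝ, 0 < x → besselJ ν (l₁ * x) = (l₁ * x / 2) ^ ν * q x := by
    intro x hx
    exact FBaux.besselJ_eq ν (by positivity)
  have hqne : ∀ x ∈ Set.Ico (0:ℝ) 1, q x ≠ 0 := by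
    rintro x ⟨hx0, hx1⟩
    rcases eq_or_lt_of_le hx0 with heq | hx0'
    · rw [← heq]; exact hq0.ne'
    · intro hzx
      refine hmin (l₁ * x) (by positivity) (by nlinarith) ?_
      rw [hJx x hx0', hzx, mul_zero]
  have hqpos : ∀ x ∈ Set.Ico (0:ℝ) 1, 0 < q x := by
    rintro x hx
    rcases lt_trichotomy (q x) 0 with hneg | hz | hpos'
    · exfalso
      have hsub : Set.Icc (q x) (q 0) ⊆ q '' Set.Icc 0 x :=
        intermediate_value_Icc' hx.1 hqcont.continuousOn
      obtain ⟨c, hc, hc0⟩ := hsub ⟨hneg.le, hq0.le⟩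
      exact hqne c ⟨hc.1, lt_of_le_of_lt hc.2 hx.2⟩ hc0
    · exact absurd hz (hqne x hx)
    · exact hpos'
  -- derivative of q at 1
  set D : ℝ := -FBaux.bF (ν + 1) ((l₁ / 2) ^ 2) * ((l₁ / 2) ^ 2 * 2) with hD
  have hderiv : HasDerivAt q D 1 := by
    have hinner : HasDerivAt (fun x : ℝ => (l₁ * x / 2) ^ 2) ((l₁ / 2) ^ 2 * 2) 1 := by
      have heq : (fun x : ℝ => (l₁ * x / 2) ^ 2) = fun x : ℝ => (l₁ / 2) ^ 2 * x ^ 2 := by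
        funext x; ring
      rw [heq]
      have := (hasDerivAt_pow 2 (1:ℝ)).const_mul ((l₁ / 2) ^ 2)
      simpa using this
    have houter : HasDerivAt (FBaux.bF ν)
        (-FBaux.bF (ν + 1) ((l₁ / 2) ^ 2)) ((l₁ * 1 / 2) ^ 2) := by
      rw [show (l₁ * 1 / 2) ^ 2 = (l₁ / 2) ^ 2 by ring]
      exact FBaux.bF_hasDerivAt hν _
    exact (houter.comp 1 hinner)
  have hD0 : D ≠ 0 := by
    rw [hD]
    exact mul_ne_zero (neg_ne_zero.2 hF1) (by positivity)
  have hDle : D ≤ 0 := by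
    have hslope : Tendsto (slope q 1) (nhdsWithin 1 (Set.Iio 1)) (nhds D) :=
      (hasDerivAt_iff_tendsto_slope.1 hderiv).mono_left
        (nhdsWithin_mono 1 fun y hy => ne_of_lt hy)
    refine le_of_tendsto hslope ?_
    filter_upwards [Ioo_mem_nhdsLT_of_mem
      (show (1:ℝ) ∈ Set.Ioc (0:ℝ) 1 from ⟨zero_lt_one, le_refl 1⟩)] with x hx
    rw [slope_def_field, hq1, sub_zero]
    exact div_nonpos_of_nonneg_of_nonpos (hqpos x ⟨hx.1.le, hx.2⟩).le (by linarith [hx.2])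
  have hDneg : D < 0 := lt_of_le_of_ne hDle hD0
  -- the quotient function
  set K : ℝ → ℝ := Function.update (fun x => q x / (1 - x)) 1 (-D) with hK
  have hKx : ∀ x : ℝ, x ≠ 1 → K x = q x / (1 - x) := fun x hx => Function.update_of_ne hx _ _
  have hK1 : K 1 = -D := Function.update_self _ _ _
  have hKcont : ContinuousOn K (Set.Icc 0 1) := by
    intro x hx
    rcases eq_or_ne x 1 with rfl | hx1
    · rw [← continuousWithinAt_diff_self]
      have hsl : Tendsto (slope q 1) (nhdsWithin 1 {(1:ℝ)}ᶜ) (nhds D) :=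
        hasDerivAt_iff_tendsto_slope.1 hderiv
      have hmono : nhdsWithin (1:ℝ) (Set.Icc 0 1 \ {1}) ≤ nhdsWithin 1 {(1:ℝ)}ᶜ :=
        nhdsWithin_mono 1 fun y hy => hy.2
      have htends : Tendsto K (nhdsWithin (1:ℝ) (Set.Icc 0 1 \ {1})) (nhds (-D)) := by
        refine Tendsto.congr' ?_ ((hsl.mono_left hmono).neg)
        filter_upwards [self_mem_nhdsWithin] with y hy
        have hy1 : y ≠ 1 := hy.2
        rw [slope_def_field, hq1, sub_zero, hKx y hy1,
          show (1:ℝ) - y = -(y - 1) by ring, div_neg]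
      rw [ContinuousWithinAt, hK1]
      exact htends
    · have hc : ContinuousAt (fun y => q y / (1 - y)) x := by
        apply ContinuousAt.div hqcont.continuousAt
        · exact (continuous_const.sub continuous_id).continuousAt
        · exact sub_ne_zero.2 (Ne.symm hx1)
      refine (hc.congr ?_).continuousWithinAt
      filter_upwards [isOpen_compl_singleton.mem_nhds hx1] with y hy
      exact (hKx y hy).symm
  have hKpos : ∀ x ∈ Set.Icc (0:ℝ) 1, 0 < K x := by
    rintro x ⟨hx0, hx1⟩
    rcases eq_or_lt_of_le hx1 with heq | hxlt
    · rw [heq, hK1]; linarith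
    · rw [hKx x (ne_of_lt hxlt)]
      exact div_pos (hqpos x ⟨hx0, hxlt⟩) (by linarith)
  obtain ⟨a, ha, hamin⟩ := isCompact_Icc.exists_isMinOn
    (Set.nonempty_Icc.2 zero_le_one) hKcont
  obtain ⟨b, hb, hbmax⟩ := isCompact_Icc.exists_isMaxOn
    (Set.nonempty_Icc.2 zero_le_one) hKcont
  -- the constant B
  have hJne : besselJ (ν + 1) l₁ ≠ 0 := by
    rw [FBaux.besselJ_eq (ν + 1) hpos]
    exact mul_ne_zero (Real.rpow_pos_of_pos hl2 _).ne' hF1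
  set A : ℝ := Real.sqrt 2 / |Real.sqrt l₁ * besselJ (ν + 1) l₁| with hA
  have hApos : 0 < A :=
    div_pos (Real.sqrt_pos.2 two_pos)
      (abs_pos.2 (mul_ne_zero (Real.sqrt_pos.2 hpos).ne' hJne))
  set B : ℝ := A * Real.sqrt l₁ * (l₁ / 2) ^ ν with hB
  have hBpos : 0 < B :=
    mul_pos (mul_pos hApos (Real.sqrt_pos.2 hpos)) (Real.rpow_pos_of_pos hl2 ν)
  have hphi : ∀ x ∈ Set.Ioo (0:ℝ) 1, fbPhi ν (fun _ => l₁) 0 x = B * q x := by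
    rintro x ⟨hx0, hx1⟩
    have hxmerge : x ^ (-ν - 1 / 2 : ℝ) * x ^ ((1:ℝ)/2) * x ^ ν = 1 := by
      rw [← Real.rpow_add hx0, ← Real.rpow_add hx0,
        show -ν - 1 / 2 + 1 / 2 + ν = 0 by ring, Real.rpow_zero]
    have hsq : Real.sqrt (l₁ * x) = Real.sqrt l₁ * (x ^ ((1:ℝ)/2)) := by
      rw [Real.sqrt_mul hpos.le, Real.sqrt_eq_rpow x]
    have hrp : (l₁ * x / 2 : ℝ) ^ ν = (l₁ / 2) ^ ν * x ^ ν := by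
      rw [show (l₁ * x / 2 : ℝ) = (l₁ / 2) * x by ring, Real.mul_rpow hl2.le hx0.le]
    show A * x ^ (-ν - 1 / 2 : ℝ) * Real.sqrt (l₁ * x) * besselJ ν (l₁ * x) = B * q x
    rw [hJx x hx0, hsq, hrp, hB]
    linear_combination (A * Real.sqrt l₁ * ((l₁ / 2) ^ ν) * q x) * hxmerge
  refine ⟨B * K a, B * K b, mul_pos hBpos (hKpos a ha), ?_, ?_⟩
  · have hab : K a ≤ K b := hamin hb
    exact mul_le_mul_of_nonneg_left hab hBpos.le
  · intro x hx
    have hx1 : x ≠ 1 := ne_of_lt hx.2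
    have hsub1 : (0:ℝ) < 1 - x := by linarith [hx.2]
    have hqK : q x = K x * (1 - x) := by
      rw [hKx x hx1, div_mul_cancel₀]
      exact hsub1.ne'
    have hxIcc : x ∈ Set.Icc (0:ℝ) 1 := ⟨hx.1.le, hx.2.le⟩
    have hKa := hamin hxIcc
    have hKb := hbmax hxIcc
    have hKa' : K a ≤ K x := hKa
    have hKb' : K x ≤ K b := hKb
    constructor
    · rw [hphi x hx, hqK]
      nlinarith [mul_nonneg (mul_nonneg hBpos.le hsub1.le) (sub_nonneg.2 hKa')]
    · rw [hphi x hx, hqK]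
      nlinarith [mul_nonneg (mul_nonneg hBpos.le hsub1.le) (sub_nonneg.2 hKb')]
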